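/- Let A be an n×n quaternion matrix with group inverse X and Moore–Penrose inverse Y, and set Z := X·A·Y and Z' := Y·A·X. If W is a Moore–Penrose inverse of Z, then W·Z = Z·W, and if W' is a Moore–Penrose inverse of Z', then W'·Z' = Z'·W'; that is, the right core inverse and the left core inverse of A are EP matrices. -/
import Mathlib

open Matrix

lemma core_aux {n : ℕ}
    (A X Y : Matrix (Fin n) (Fin n) (Quaternion ℝ))
    (hX1 : A * X * A = A) (hX2 : X * A * X = X) (hX3 : A * X = X * A)
    (hY1 : A * Y * A = A) (hY2 : Y * A * Y = Y)
    (hY3 : (A * Y).conjTranspose = A * Y)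
    (W : Matrix (Fin n) (Fin n) (Quaternion ℝ))
    (hw1 : (X * A * Y) * W * (X * A * Y) = X * A * Y)
    (hw3 : ((X * A * Y) * W).conjTranspose = (X * A * Y) * W)
    (hw4 : (W * (X * A * Y)).conjTranspose = W * (X * A * Y)) :
    W * (X * A * Y) = (X * A * Y) * W := by
  set Z := X * A * Y with hZ
  set W₀ := A * A * Y with hW₀
  -- basic identities
  have hXA2 : X * A * A = A := by rw [← hX3, hX1]
  have hAAX : A * A * X = A := by rw [mul_assoc, hX3, ← mul_assoc, hX1]
  have hAXX : A * X * X = X := by rw [hX3, hX2]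
  -- tailed versions
  have tY1 : ∀ T : Matrix (Fin n) (Fin n) (Quaternion ℝ),
      A * (Y * (A * T)) = A * T := by
    intro T; rw [← mul_assoc, ← mul_assoc, hY1]
  have tX1 : ∀ T : Matrix (Fin n) (Fin n) (Quaternion ℝ),
      A * (X * (A * T)) = A * T := by
    intro T; rw [← mul_assoc, ← mul_assoc, hX1]
  have tXAA : ∀ T : Matrix (Fin n) (Fin n) (Quaternion ℝ),
      X * (A * (A * T)) = A * T := by
    intro T; rw [← mul_assoc, ← mul_assoc, hXA2]
  have tAAX : ∀ T : Matrix (Fin n) (Fin n) (Quaternion ℝ),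
      A * (A * (X * T)) = A * T := by
    intro T; rw [← mul_assoc, ← mul_assoc, hAAX]
  have tAXX : ∀ T : Matrix (Fin n) (Fin n) (Quaternion ℝ),
      A * (X * (X * T)) = X * T := by
    intro T; rw [← mul_assoc, ← mul_assoc, hAXX]
  -- key products
  have hZW0 : Z * W₀ = A * Y := by
    show X * A * Y * (A * A * Y) = A * Y
    simp only [mul_assoc]
    rw [tY1, tXAA]
  have hW0Z : W₀ * Z = A * Y := by
    show A * A * Y * (X * A * Y) = A * Y
    simp only [mul_assoc]
    rw [← tAXX (A * Y), tY1, tAAX, tX1]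
  have hAYZ : A * Y * Z = Z := by
    show A * Y * (X * A * Y) = X * A * Y
    simp only [mul_assoc]
    rw [← tAXX (A * Y), tY1]
  have hZW0Z : Z * W₀ * Z = Z := by rw [hZW0, hAYZ]
  have hW0herm : (Z * W₀).conjTranspose = Z * W₀ := by rw [hZW0]; exact hY3
  have hW0Zherm : (W₀ * Z).conjTranspose = W₀ * Z := by rw [hW0Z]; exact hY3
  -- Z * W = Z * W₀
  have e1 : Z * W = Z * W₀ := by
    calc Z * W = ((Z * W).conjTranspose) := hw3.symm
      _ = ((Z * W₀ * Z) * W).conjTranspose := by rw [hZW0Z]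
      _ = ((Z * W₀) * (Z * W)).conjTranspose := by rw [mul_assoc (Z * W₀) Z W]
      _ = (Z * W).conjTranspose * (Z * W₀).conjTranspose := by
            rw [Matrix.conjTranspose_mul]
      _ = (Z * W) * (Z * W₀) := by rw [hw3, hW0herm]
      _ = (Z * W * Z) * W₀ := by rw [mul_assoc (Z * W) Z W₀]
      _ = Z * W₀ := by rw [hw1]
  -- W * Z = W₀ * Z
  have e2 : W * Z = W₀ * Z := by
    calc W * Z = ((W * Z).conjTranspose) := hw4.symm
      _ = (W * (Z * W₀ * Z)).conjTranspose := by rw [hZW0Z]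
      _ = ((W * Z) * (W₀ * Z)).conjTranspose := by
            rw [show W * (Z * W₀ * Z) = (W * Z) * (W₀ * Z) from by
              simp only [mul_assoc]]
      _ = (W₀ * Z).conjTranspose * (W * Z).conjTranspose := by
            rw [Matrix.conjTranspose_mul]
      _ = (W₀ * Z) * (W * Z) := by rw [hw4, hW0Zherm]
      _ = W₀ * (Z * W * Z) := by simp only [mul_assoc]
      _ = W₀ * Z := by rw [hw1]
  rw [e1, e2, hZW0, hW0Z]

/-- The right core inverse `Z = X·A·Y` and the left core inverse `Z' = Y·A·X`
of a quaternion matrix are EP matrices: any Moore–Penrose inverse of them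
commutes with them. -/
theorem core_inverses_are_EP {n : ℕ}
    (A X Y : Matrix (Fin n) (Fin n) (Quaternion ℝ))
    (hX1 : A * X * A = A) (hX2 : X * A * X = X) (hX3 : A * X = X * A)
    (hY1 : A * Y * A = A) (hY2 : Y * A * Y = Y)
    (hY3 : (A * Y).conjTranspose = A * Y) (hY4 : (Y * A).conjTranspose = Y * A) :
    (∀ W : Matrix (Fin n) (Fin n) (Quaternion ℝ),
      (X * A * Y) * W * (X * A * Y) = X * A * Y →
      W * (X * A * Y) * W = W →
      ((X * A * Y) * W).conjTranspose = (X * A * Y) * W →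
      (W * (X * A * Y)).conjTranspose = W * (X * A * Y) →
      W * (X * A * Y) = (X * A * Y) * W) ∧
    (∀ W' : Matrix (Fin n) (Fin n) (Quaternion ℝ),
      (Y * A * X) * W' * (Y * A * X) = Y * A * X →
      W' * (Y * A * X) * W' = W' →
      ((Y * A * X) * W').conjTranspose = (Y * A * X) * W' →
      (W' * (Y * A * X)).conjTranspose = W' * (Y * A * X) →
      W' * (Y * A * X) = (Y * A * X) * W') := by
  constructor
  · intro W h1 _h2 h3 h4
    exact core_aux A X Y hX1 hX2 hX3 hY1 hY2 hY3 W h1 h3 h4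
  · intro W' h1 _h2 h3 h4
    -- apply the lemma to the conjugate transposes
    set B := A.conjTranspose with hB
    set XB := X.conjTranspose with hXB
    set YB := Y.conjTranspose with hYB
    have hZ'' : (Y * A * X).conjTranspose = XB * B * YB := by
      rw [Matrix.conjTranspose_mul, Matrix.conjTranspose_mul, ← mul_assoc]
    have hb1 : B * XB * B = B := by
      rw [hB, hXB, ← Matrix.conjTranspose_mul, ← Matrix.conjTranspose_mul,
        ← mul_assoc, hX1]
    have hb2 : XB * B * XB = XB := by
      rw [hB, hXB, ← Matrix.conjTranspose_mul, ← Matrix.conjTranspose_mul,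
        ← mul_assoc, hX2]
    have hb3 : B * XB = XB * B := by
      rw [hB, hXB, ← Matrix.conjTranspose_mul, ← Matrix.conjTranspose_mul, hX3]
    have hbY1 : B * YB * B = B := by
      rw [hB, hYB, ← Matrix.conjTranspose_mul, ← Matrix.conjTranspose_mul,
        ← mul_assoc, hY1]
    have hbY2 : YB * B * YB = YB := by
      rw [hB, hYB, ← Matrix.conjTranspose_mul, ← Matrix.conjTranspose_mul,
        ← mul_assoc, hY2]
    have hbY3 : (B * YB).conjTranspose = B * YB := by
      rw [hB, hYB, ← Matrix.conjTranspose_mul, Matrix.conjTranspose_conjTranspose]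
      exact hY4.symm
    -- transfer the MP axioms of W' to W'ᴴ w.r.t. Z'' = XB * B * YB
    have hw1 : (XB * B * YB) * W'.conjTranspose * (XB * B * YB) = XB * B * YB := by
      rw [← hZ'', ← Matrix.conjTranspose_mul, ← Matrix.conjTranspose_mul]
      rw [show Y * A * X * (W' * (Y * A * X)) = Y * A * X * W' * (Y * A * X) from by
        simp only [mul_assoc]]
      rw [h1]
    have hw3 : ((XB * B * YB) * W'.conjTranspose).conjTranspose
        = (XB * B * YB) * W'.conjTranspose := by
      rw [← hZ'', ← Matrix.conjTranspose_mul]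
      rw [Matrix.conjTranspose_conjTranspose]
      rw [h4]
    have hw4 : (W'.conjTranspose * (XB * B * YB)).conjTranspose
        = W'.conjTranspose * (XB * B * YB) := by
      rw [← hZ'', ← Matrix.conjTranspose_mul]
      rw [Matrix.conjTranspose_conjTranspose]
      rw [h3]
    have key := core_aux B XB YB hb1 hb2 hb3 hbY1 hbY2 hbY3
      W'.conjTranspose hw1 hw3 hw4
    -- take conjTranspose of key
    rw [← hZ'', ← Matrix.conjTranspose_mul, ← Matrix.conjTranspose_mul] at key
    have := congrArg Matrix.conjTranspose key
    rw [Matrix.conjTranspose_conjTranspose, Matrix.conjTranspose_conjTranspose] at this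
    exact this.symm
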